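/- Suppose real numbers u_1,...,u_T satisfy u_t − u_s ≥ μ^t(x^s) − μ^t(x^t) for all t, s, and define u : X → ℝ by u(x) = min_t { u_t + μ^t(x^t) − μ^t(x) }. Then the quasilinear utility v(x,m) = u(x) + m rationalizes the experiment: for every t and every (x,m) ∈ B^t = {(x,m) : μ^t(x) ≥ m}, we have u(x) + m ≤ u(x^t) + μ^t(x^t). -/
import Mathlib


/-- Rationalization step: given utility numbers solving the quasilinear Afriat inequalities,
the quasilinear utility `v(x,m) = u(x) + m` built from
`u(x) = min_t { u_t + μ^t(x^t) − μ^t(x) }` rationalizes the experiment. -/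
theorem afriat_extension_rationalizes {n T : ℕ} (hT : 0 < T)
    (X : Set (Fin n → ℝ)) (xs : Fin T → (Fin n → ℝ)) (hxX : ∀ t, xs t ∈ X)
    (μ : Fin T → (Fin n → ℝ) → ℝ)
    (hcont : ∀ t, ContinuousOn (μ t) X)
    (hdecr : ∀ t, ∀ x ∈ X, ∀ y ∈ X, x ≤ y → μ t y ≤ μ t x)
    (uv : Fin T → ℝ)
    (hafriat : ∀ t s : Fin T, uv t - uv s ≥ μ t (xs s) - μ t (xs t))
    (u : (Fin n → ℝ) → ℝ)
    (hu : ∀ x, u x = sInf (Set.range fun t : Fin T => uv t + μ t (xs t) - μ t x)) :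
    ∀ t, ∀ x ∈ X, ∀ m : ℝ, m ≤ μ t x → u x + m ≤ u (xs t) + μ t (xs t) := by
  intro t x hx m hm
  have hne : Nonempty (Fin T) := ⟨⟨0, hT⟩⟩
  have hux : u x ≤ uv t + μ t (xs t) - μ t x := by
    rw [hu]
    exact csInf_le (Set.Finite.bddBelow (Set.finite_range _)) ⟨t, rfl⟩
  have huxt : uv t ≤ u (xs t) := by
    rw [hu]
    apply le_csInf (Set.range_nonempty _)
    rintro y ⟨s, rfl⟩
    show uv t ≤ uv s + μ s (xs s) - μ s (xs t)
    have := hafriat s t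
    linarith
  linarith
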